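/- Let 𝒴 be a class of right R-modules closed under direct products and let X be an exact complex of left R-modules. If Y ⊗_R X is an exact complex for every Y ∈ 𝒴, then Y ⊗_R X is exact for every Y that is a pure submodule of a product of modules from 𝒴. -/

import Mathlib

open CategoryTheory CategoryTheory.Limits

set_option autoImplicit false

universe u

open TensorProduct in
private lemma exists_char_vanishing' {A B : Type u} [AddCommGroup A] [AddCommGroup B]
    (f : A →+ B) (u : B) (hu : u ∉ Set.range f) :
    ∃ c : CharacterModule B, (∀ a, c (f a) = 0) ∧ c u ≠ 0 := by
  set fl := f.toIntLinearMap with hfl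
  set N := LinearMap.range fl with hN
  have hπu : N.mkQ u ≠ 0 := by
    intro h
    exact hu ((Submodule.Quotient.mk_eq_zero N).1 h)
  obtain ⟨c₀, hc₀⟩ := CharacterModule.exists_character_apply_ne_zero_of_ne_zero hπu
  refine ⟨(AddMonoidHom.comp c₀ N.mkQ.toAddMonoidHom : B →+ _), fun a => ?_, hc₀⟩
  show c₀ (N.mkQ (f a)) = 0
  have : N.mkQ (fl a) = 0 := (Submodule.Quotient.mk_eq_zero N).2 ⟨a, rfl⟩
  rw [show f a = fl a from rfl, this, map_zero]

private lemma exists_char_extend' {A B C : Type u} [AddCommGroup A] [AddCommGroup B]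
    [AddCommGroup C] (f : A →+ B) (g : B →+ C) (hfg : Function.Exact f g)
    (c : CharacterModule B) (hc : ∀ a, c (f a) = 0) :
    ∃ c' : CharacterModule C, ∀ b, c' (g b) = c b := by
  set gl := g.toIntLinearMap with hgl
  set cl : B →ₗ[ℤ] AddCircle (1 : ℚ) := (c : B →+ AddCircle (1:ℚ)).toIntLinearMap with hcl
  have hker : LinearMap.ker gl ≤ LinearMap.ker cl := by
    intro b hb
    obtain ⟨a, ha⟩ := (hfg b).1 hb
    show c b = 0
    rw [← ha]; exact hc a
  set cbar := Submodule.liftQ (LinearMap.ker gl) cl hker with hcbar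
  set eiso := gl.quotKerEquivRange with heiso
  obtain ⟨c', hc'⟩ := CharacterModule.dual_surjective_of_injective
      (LinearMap.range gl).subtype (Submodule.injective_subtype _)
      (((cbar ∘ₗ eiso.symm.toLinearMap).toAddMonoidHom :
        LinearMap.range gl →+ AddCircle (1:ℚ)) : CharacterModule (LinearMap.range gl))
  refine ⟨c', fun b => ?_⟩
  have h1 := DFunLike.congr_fun hc' (⟨g b, ⟨b, rfl⟩⟩ : LinearMap.range gl)
  have h2 : eiso (Submodule.Quotient.mk b) = ⟨g b, ⟨b, rfl⟩⟩ := by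
    apply Subtype.ext; rfl
  have h3 : eiso.symm (⟨g b, ⟨b, rfl⟩⟩ : LinearMap.range gl) = Submodule.Quotient.mk b := by
    rw [← h2, LinearEquiv.symm_apply_apply]
  simp only [CharacterModule.dual_apply] at h1
  have : c' (g b) = cbar (eiso.symm ⟨g b, ⟨b, rfl⟩⟩) := h1
  rw [this, h3]
  rfl

open TensorProduct in
private lemma exists_section' {R : Type u} [CommRing R] {P Y : Type u}
    [AddCommGroup P] [Module R P] [AddCommGroup Y] [Module R Y]
    (e : P →ₗ[R] Y)
    (hinj : Function.Injective (LinearMap.lTensor (CharacterModule P) e)) :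
    ∃ s : CharacterModule P →ₗ[R] CharacterModule Y,
      ∀ (χ : CharacterModule P) (p : P), (s χ) (e p) = χ p := by
  obtain ⟨C, hC⟩ := CharacterModule.dual_surjective_of_injective _ hinj
      (CharacterModule.uncurry (LinearMap.id (R := R) (M := CharacterModule P)))
  refine ⟨CharacterModule.curry C, fun χ p => ?_⟩
  have h1 := DFunLike.congr_fun hC (χ ⊗ₜ[R] p)
  simp only [CharacterModule.dual_apply] at h1
  have h2 : C ((LinearMap.lTensor (CharacterModule P) e) (χ ⊗ₜ[R] p)) = χ p := by
    rw [show ((CharacterModule.uncurry (LinearMap.id (R := R)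
      (M := CharacterModule P))) (χ ⊗ₜ[R] p) : AddCircle (1:ℚ)) = χ p from rfl] at h1
    exact h1
  rw [LinearMap.lTensor_tmul] at h2
  exact h2

variable {R : Type u} [CommRing R]

/-- A short exact sequence of `R`-modules encoded by two linear maps. -/
def IsSES {A B C : ModuleCat.{u} R} (f : A →ₗ[R] B) (g : B →ₗ[R] C) : Prop :=
  Function.Injective f ∧ Function.Exact f g ∧ Function.Surjective g

/-- If `𝒴` is closed under products and an exact complex `X` of modules
stays exact under `Y ⊗_R -` for all `Y ∈ 𝒴`, then it stays exact under `P ⊗_R -` for every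
pure submodule `P` of a product of modules from `𝒴`. -/
theorem statement6 (𝒴 : ModuleCat.{u} R → Prop)
    (hprod : ∀ (ι : Type u) (f : ι → ModuleCat.{u} R), (∀ i, 𝒴 (f i)) →
      𝒴 (ModuleCat.of R (∀ i, f i)))
    (Xc : ℤ → ModuleCat.{u} R) (d : ∀ n : ℤ, Xc n →ₗ[R] Xc (n + 1))
    (hex : ∀ n, Function.Exact (d n) (d (n + 1)))
    (hten : ∀ Y : ModuleCat.{u} R, 𝒴 Y → ∀ n,
      Function.Exact (LinearMap.lTensor Y (d n)) (LinearMap.lTensor Y (d (n + 1))))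
    (P : ModuleCat.{u} R) (ι : Type u) (f : ι → ModuleCat.{u} R) (hf : ∀ i, 𝒴 (f i))
    (e : P →ₗ[R] (∀ i, f i)) (he : Function.Injective e)
    (hpure : ∀ (K : Type u) [AddCommGroup K] [Module R K],
      Function.Injective (LinearMap.lTensor K e)) :
    ∀ n, Function.Exact (LinearMap.lTensor P (d n)) (LinearMap.lTensor P (d (n + 1))) := by
  classical
  set Y : ModuleCat.{u} R := ModuleCat.of R (∀ i, f i) with hYdef
  have hY : 𝒴 Y := hprod ι f hf
  -- the splitting of the dual of `e`
  obtain ⟨s, hs⟩ := exists_section' e (hpure (CharacterModule P))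
  intro n u
  constructor
  · -- ker ⊆ range
    intro hu
    by_contra hur
    obtain ⟨c, hcf, hcu⟩ := exists_char_vanishing'
      (LinearMap.lTensor P (d n)).toAddMonoidHom u hur
    -- φ : X_{n+1} →ₗ CharacterModule P, φ x p = c (p ⊗ x)
    set φ : Xc (n+1) →ₗ[R] CharacterModule P :=
      CharacterModule.curry (CharacterModule.dual
        ((TensorProduct.comm R (Xc (n+1)) P).toLinearMap) c) with hφdef
    have hφ : ∀ (x : Xc (n+1)) (p : P), φ x p = c (p ⊗ₜ[R] x) := fun x p => rfl
    have hφd : ∀ x : Xc n, φ (d n x) = 0 := by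
      intro x
      ext p
      show c (p ⊗ₜ[R] d n x) = 0
      exact hcf (p ⊗ₜ[R] x)
    -- Φ : X_{n+1} →ₗ CharacterModule Y
    set Φ : Xc (n+1) →ₗ[R] CharacterModule Y := s ∘ₗ φ with hΦdef
    -- C₁ : character on Y ⊗ X_{n+1}
    set C₁ : CharacterModule (TensorProduct R Y (Xc (n+1))) :=
      CharacterModule.dual ((TensorProduct.comm R Y (Xc (n+1))).toLinearMap)
        (CharacterModule.uncurry Φ) with hC₁def
    have hC₁tmul : ∀ (y : Y) (x : Xc (n+1)), C₁ (y ⊗ₜ[R] x) = Φ x y := fun y x => rfl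
    have hC₁f : ∀ w : TensorProduct R Y (Xc n), C₁ ((LinearMap.lTensor Y (d n)) w) = 0 := by
      intro w
      induction w using TensorProduct.induction_on with
      | zero => simp
      | tmul y x =>
          rw [LinearMap.lTensor_tmul, hC₁tmul, hΦdef]
          show s (φ (d n x)) y = 0
          rw [hφd x, map_zero]
          rfl
      | add a b ha hb => rw [map_add, map_add, ha, hb, add_zero]
    obtain ⟨C₂, hC₂⟩ := exists_char_extend'
      (LinearMap.lTensor Y (d n)).toAddMonoidHom
      (LinearMap.lTensor Y (d (n+1))).toAddMonoidHom
      (hten Y hY n) C₁ hC₁f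
    -- key identity
    have hkey : ∀ v : TensorProduct R P (Xc (n+1)),
        c v = C₂ ((e.rTensor (Xc (n+1+1))) ((LinearMap.lTensor P (d (n+1))) v)) := by
      intro v
      induction v using TensorProduct.induction_on with
      | zero => simp
      | tmul p x =>
          have h1 : c (p ⊗ₜ[R] x) = (s (φ x)) (e p) := (hs (φ x) p).symm
          have h2 : (s (φ x)) (e p) = C₁ ((e p : Y) ⊗ₜ[R] x) := rfl
          have h3 : C₁ ((e p : Y) ⊗ₜ[R] x) =
              C₂ ((LinearMap.lTensor Y (d (n+1))) ((e p : Y) ⊗ₜ[R] x)) :=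
            (hC₂ _).symm
          rw [h1, h2, h3, LinearMap.lTensor_tmul, LinearMap.lTensor_tmul,
            LinearMap.rTensor_tmul]
      | add a b ha hb => simp only [map_add, ha, hb]
    have : c u = 0 := by
      rw [hkey u, hu, map_zero, map_zero]
    exact hcu this
  · -- range ⊆ ker
    rintro ⟨v, rfl⟩
    rw [← LinearMap.comp_apply, ← LinearMap.lTensor_comp]
    have hz : (d (n+1)) ∘ₗ (d n) = 0 := by
      ext x; exact (hex n).apply_apply_eq_zero x
    rw [hz, LinearMap.lTensor_zero, LinearMap.zero_apply]
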